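/- arXiv:1902.09989 — 3 statements merged into one kernel-verified Lean document; each statement's English description precedes it below -/
import Mathlib

section
/- Let 𝒯ₙ ⊆ Mₙ(ℂ) denote the set of upper triangular n×n complex matrices that are constant on the main diagonal. Then (a) 𝒯ₙ is a hereditarily antisymmetric operator algebra, and (b) every operator algebra in Mₙ(ℂ) that properly contains 𝒯ₙ is not antisymmetric. In particular, 𝒯ₙ is a maximal hereditarily antisymmetric operator algebra. -/
open Matrix ContinuousLinearMap

noncomputable section

abbrev Mat (n : ℕ) := Matrix (Fin n) (Fin n) ℂ
abbrev Euc (n : ℕ) := EuclideanSpace ℂ (Fin n)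

/-- An operator algebra: a complex linear subspace of matrices closed under multiplication. -/
def IsOpAlg {n : ℕ} (S : Set (Mat n)) : Prop :=
  0 ∈ S ∧ (∀ A ∈ S, ∀ B ∈ S, A + B ∈ S) ∧ (∀ (c : ℂ), ∀ A ∈ S, c • A ∈ S) ∧
    (∀ A ∈ S, ∀ B ∈ S, A * B ∈ S)

/-- Antisymmetry: `𝒜 ∩ 𝒜* ⊆ ℂ·I`. -/
def Antisym {n : ℕ} (S : Set (Mat n)) : Prop :=
  ∀ A ∈ S, Aᴴ ∈ S → ∃ c : ℂ, A = c • (1 : Mat n)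

/-- The operator on Euclidean space corresponding to a matrix. -/
def opOf {n : ℕ} (A : Mat n) : Euc n →L[ℂ] Euc n := Matrix.toEuclideanCLM (𝕜 := ℂ) A

/-- Orthogonal projection onto `E` as an endomorphism of `ℂⁿ`. -/
def oproj {n : ℕ} (E : Submodule ℂ (Euc n)) : Euc n →L[ℂ] Euc n :=
  E.subtypeL ∘L E.orthogonalProjection

def InvariantSub {n : ℕ} (S : Set (Mat n)) (E : Submodule ℂ (Euc n)) : Prop :=
  ∀ A ∈ S, ∀ x ∈ E, opOf A x ∈ E

def SemiInvariantSub {n : ℕ} (S : Set (Mat n)) (E : Submodule ℂ (Euc n)) : Prop :=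
  ∃ E₁ E₂ : Submodule ℂ (Euc n), InvariantSub S E₁ ∧ InvariantSub S E₂ ∧ E₂ ≤ E₁ ∧ E = E₁ ⊓ E₂ᗮ

/-- The compression `PAP` of a matrix to a subspace. -/
def compr {n : ℕ} (E : Submodule ℂ (Euc n)) (A : Mat n) : Euc n →L[ℂ] Euc n :=
  oproj E ∘L opOf A ∘L oproj E

/-- Hereditary antisymmetry: the compression to every semi-invariant subspace is antisymmetric. -/
def HerAntisym {n : ℕ} (S : Set (Mat n)) : Prop :=
  ∀ E : Submodule ℂ (Euc n), SemiInvariantSub S E →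
    ∀ A ∈ S, ∀ B ∈ S, compr E A = ContinuousLinearMap.adjoint (compr E B) →
      ∃ c : ℂ, compr E A = c • oproj E

/-- `𝒯ₙ`: the upper triangular matrices with constant main diagonal. -/
def Tn (n : ℕ) : Set (Mat n) :=
  {A | (∀ i j : Fin n, j < i → A i j = 0) ∧ ∀ i j : Fin n, A i i = A j j}

/-! ### Auxiliary lemmas -/

lemma opOf_mul {n : ℕ} (A B : Mat n) : opOf (A * B) = opOf A ∘L opOf B := by
  unfold opOf; rw [_root_.map_mul]; rfl

lemma opOf_smul {n : ℕ} (c : ℂ) (A : Mat n) : opOf (c • A) = c • opOf A := by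
  unfold opOf; rw [_root_.map_smul]

set_option synthInstance.maxHeartbeats 2000000 in
lemma adjoint_opOf {n : ℕ} (A : Mat n) : adjoint (opOf A) = opOf Aᴴ := by
  unfold opOf
  rw [← star_eq_adjoint, ← Matrix.star_eq_conjTranspose, map_star]

lemma opOf_inj {n : ℕ} {A B : Mat n} (h : opOf A = opOf B) : A = B :=
  (Matrix.toEuclideanCLM (𝕜 := ℂ) (n := Fin n)).injective h

/-- coordinate subspace -/
def Csub {n : ℕ} (s : Finset (Fin n)) : Submodule ℂ (Euc n) where
  carrier := {x | ∀ j ∉ s, x j = 0}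
  add_mem' := by intro a b ha hb j hj; simp [PiLp.add_apply, ha j hj, hb j hj]
  zero_mem' := by intro j _; rfl
  smul_mem' := by intro c x hx j hj; simp [PiLp.smul_apply, hx j hj]

def ind {n : ℕ} (s : Finset (Fin n)) : Mat n :=
  Matrix.diagonal (fun j => if j ∈ s then 1 else 0)

lemma opOf_apply {n : ℕ} (A : Mat n) (x : Euc n) (j : Fin n) :
    opOf A x j = ∑ k, A j k * x k := rfl

lemma opOf_ind_apply {n : ℕ} (s : Finset (Fin n)) (x : Euc n) (j : Fin n) :
    opOf (ind s) x j = if j ∈ s then x j else 0 := by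
  rw [opOf_apply]
  rw [Finset.sum_eq_single j]
  · simp [ind, Matrix.diagonal_apply_eq, ite_mul]
  · intro k _ hk; simp [ind, Matrix.diagonal_apply_ne _ (Ne.symm hk)]
  · simp

lemma oproj_Csub {n : ℕ} (s : Finset (Fin n)) : oproj (Csub s) = opOf (ind s) := by
  ext1 x
  have h1 : opOf (ind s) x ∈ Csub s := by
    intro j hj; rw [opOf_ind_apply]; simp [hj]
  have h2 : ∀ w ∈ Csub s, (inner ℂ (x - opOf (ind s) x) w : ℂ) = 0 := by
    intro w hw
    rw [PiLp.inner_apply]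
    refine Finset.sum_eq_zero fun j _ => ?_
    by_cases hj : j ∈ s
    · simp [PiLp.sub_apply, opOf_ind_apply, hj]
    · simp [hw j hj]
  have := Submodule.eq_starProjection_of_mem_of_inner_eq_zero h1 h2
  show (Csub s).starProjection x = _
  simpa using this

lemma mem_Csub {n : ℕ} {s : Finset (Fin n)} {x : Euc n} :
    x ∈ Csub s ↔ ∀ j ∉ s, x j = 0 := Iff.rfl

lemma euc_eq_sum_single {n : ℕ} (x : Euc n) :
    x = ∑ j, x j • EuclideanSpace.single j (1:ℂ) := by
  ext i
  rw [WithLp.ofLp_sum, Finset.sum_apply i Finset.univ _]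
  simp [EuclideanSpace.single_apply]

lemma std_mem_Tn {n : ℕ} {a b : Fin n} (h : a < b) :
    Matrix.single a b (1:ℂ) ∈ Tn n := by
  constructor
  · intro i j hji
    rw [Matrix.single_apply_of_ne]
    rintro ⟨rfl, rfl⟩
    exact absurd h (not_lt.2 hji.le)
  · intro i j
    rw [Matrix.single_apply_of_ne, Matrix.single_apply_of_ne]
    · rintro ⟨rfl, rfl⟩; exact absurd h (lt_irrefl _)
    · rintro ⟨rfl, rfl⟩; exact absurd h (lt_irrefl _)

lemma opOf_std {n : ℕ} (a b : Fin n) (x : Euc n) :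
    opOf (Matrix.single a b (1:ℂ)) x = x b • EuclideanSpace.single a (1:ℂ) := by
  ext j
  rw [opOf_apply, Finset.sum_eq_single b]
  · rcases eq_or_ne j a with rfl | hj
    · simp [Matrix.single, EuclideanSpace.single_apply, mul_comm]
    · simp [Matrix.single, EuclideanSpace.single_apply, hj, Ne.symm hj]
  · intro k _ hk; simp [Matrix.single, (Ne.symm hk : b ≠ k)]
  · simp

lemma single_mem_inv {n : ℕ} {E : Submodule ℂ (Euc n)} (hE : InvariantSub (Tn n) E)
    {x : Euc n} (hx : x ∈ E) {a b : Fin n} (hab : a < b) (hxb : x b ≠ 0) :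
    EuclideanSpace.single a (1:ℂ) ∈ E := by
  have h1 : opOf (Matrix.single a b (1:ℂ)) x ∈ E :=
    hE _ (std_mem_Tn hab) x hx
  rw [opOf_std] at h1
  have h2 := E.smul_mem (x b)⁻¹ h1
  rwa [smul_smul, inv_mul_cancel₀ hxb, one_smul] at h2

open Classical in
lemma invariant_classify {n : ℕ} {E : Submodule ℂ (Euc n)} (hE : InvariantSub (Tn n) E) :
    ∃ k : ℕ, E = Csub (Finset.univ.filter (fun j : Fin n => (j:ℕ) < k)) := by
  by_cases h0 : ∀ x ∈ E, ∀ j, x j = 0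
  · refine ⟨0, le_antisymm (fun x hx => ?_) (fun x hx => ?_)⟩
    · intro j _; exact h0 x hx j
    · have : x = 0 := by ext j; exact hx j (by simp)
      rw [this]; exact E.zero_mem
  push_neg at h0
  obtain ⟨x₀, hx₀E, j₀, hj₀⟩ := h0
  -- the set of coordinates supported by E
  set J : Finset (Fin n) := Finset.univ.filter (fun j => ∃ x ∈ E, x j ≠ 0) with hJ
  have hJne : J.Nonempty := ⟨j₀, by simp [hJ]; exact ⟨x₀, hx₀E, hj₀⟩⟩
  set m := J.max' hJne with hm
  have hmJ : m ∈ J := J.max'_mem hJne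
  have hbound : ∀ x ∈ E, ∀ j : Fin n, m < j → x j = 0 := by
    intro x hx j hj
    by_contra hne
    have : j ∈ J := by simp [hJ]; exact ⟨x, hx, hne⟩
    exact absurd (J.le_max' j this) (not_le.2 hj)
  obtain ⟨y, hyE, hym⟩ : ∃ x ∈ E, x m ≠ 0 := by
    have := hmJ; simp [hJ] at this; exact this
  -- all singles with index ≤ m are in E
  have hsingle : ∀ a : Fin n, a ≤ m → EuclideanSpace.single a (1:ℂ) ∈ E := by
    intro a ha
    rcases lt_or_eq_of_le ha with h | h
    · exact single_mem_inv hE hyE h hym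
    · rw [h]
      -- y minus its lower part equals y m • single a 1
      set z : Euc n := y - ∑ j ∈ Finset.univ.filter (fun j => j < m),
        y j • EuclideanSpace.single j (1:ℂ) with hz
      have hzE : z ∈ E := by
        refine E.sub_mem hyE (Submodule.sum_mem E fun j hj => ?_)
        simp only [Finset.mem_filter] at hj
        exact E.smul_mem _ (single_mem_inv hE hyE hj.2 hym)
      have hzeq : z = y m • EuclideanSpace.single m (1:ℂ) := by
        ext i
        rw [hz]
        simp only [PiLp.sub_apply]
        rw [WithLp.ofLp_sum, Finset.sum_apply i _ _]
        simp only [PiLp.smul_apply, EuclideanSpace.single_apply, smul_eq_mul]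
        simp only [mul_ite, mul_one, mul_zero]
        rw [Finset.sum_ite_eq (Finset.univ.filter (fun j => j < m)) i (fun j => y j)]
        by_cases hia : i < m
        · simp [hia, Finset.mem_filter, EuclideanSpace.single_apply, (ne_of_lt hia)]
        · rcases eq_or_lt_of_le (not_lt.1 hia) with h' | h'
          · rw [← h']; simp [Finset.mem_filter, EuclideanSpace.single_apply]
          · simp [Finset.mem_filter, hia, EuclideanSpace.single_apply,
              (ne_of_gt h' : i ≠ m), hbound y hyE i h']
      have h2 := E.smul_mem (y m)⁻¹ hzE
      rw [hzeq, smul_smul, inv_mul_cancel₀ hym, one_smul] at h2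
      exact h2
  refine ⟨(m:ℕ) + 1, le_antisymm (fun x hx => ?_) (fun x hx => ?_)⟩
  · intro j hj
    simp only [Finset.mem_filter, Finset.mem_univ, true_and, not_lt] at hj
    exact hbound x hx j (by omega)
  · rw [mem_Csub] at hx
    rw [euc_eq_sum_single x]
    refine Submodule.sum_mem E fun j _ => ?_
    by_cases hj : (j:ℕ) < (m:ℕ) + 1
    · exact E.smul_mem _ (hsingle j (by omega))
    · have : x j = 0 := hx j (by simp; omega)
      rw [this, zero_smul]; exact E.zero_mem

lemma single_mem_Csub {n : ℕ} {s : Finset (Fin n)} {j : Fin n} (hj : j ∈ s) :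
    EuclideanSpace.single j (1:ℂ) ∈ Csub s := by
  intro i hi
  rw [EuclideanSpace.single_apply]
  simp only [ite_eq_right_iff]
  rintro rfl; exact absurd hj hi

lemma Csub_orthogonal {n : ℕ} (s : Finset (Fin n)) : (Csub s)ᗮ = Csub sᶜ := by
  ext y
  rw [Submodule.mem_orthogonal]
  constructor
  · intro h j hj
    simp only [Finset.mem_compl, not_not] at hj
    have := h _ (single_mem_Csub hj)
    rw [EuclideanSpace.inner_single_left] at this
    simpa using this
  · intro h u hu
    rw [PiLp.inner_apply]
    refine Finset.sum_eq_zero fun j _ => ?_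
    by_cases hj : j ∈ s
    · rw [h j (by simpa using hj)]; simp
    · rw [hu j hj]; simp

lemma Csub_inf {n : ℕ} (s t : Finset (Fin n)) : Csub s ⊓ Csub t = Csub (s ∩ t) := by
  ext x
  simp only [Submodule.mem_inf, mem_Csub]
  constructor
  · rintro ⟨h1, h2⟩ j hj
    rw [Finset.mem_inter] at hj
    by_cases h : j ∈ s
    · exact h2 j (fun ht => hj ⟨h, ht⟩)
    · exact h1 j h
  · intro h
    exact ⟨fun j hj => h j (fun hm => hj (Finset.mem_inter.1 hm).1),
           fun j hj => h j (fun hm => hj (Finset.mem_inter.1 hm).2)⟩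

lemma Csub_univ {n : ℕ} : Csub (Finset.univ : Finset (Fin n)) = ⊤ := by
  ext x; simp [mem_Csub]

lemma ind_conjTranspose {n : ℕ} (s : Finset (Fin n)) : (ind s)ᴴ = ind s := by
  rw [ind, Matrix.diagonal_conjTranspose]
  have : (star fun j => if j ∈ s then (1:ℂ) else 0) = fun j => if j ∈ s then (1:ℂ) else 0 := by
    funext j; rw [Pi.star_apply]; split <;> simp
  rw [this]

lemma ind_mul_mul {n : ℕ} (s : Finset (Fin n)) (A : Mat n) (i j : Fin n) :
    (ind s * A * ind s) i j =
      (if i ∈ s then 1 else 0) * A i j * (if j ∈ s then 1 else 0) := by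
  rw [ind, Matrix.mul_diagonal, Matrix.diagonal_mul]

lemma compression_antisym {n : ℕ} {A B : Mat n} (hA : A ∈ Tn n) (hB : B ∈ Tn n)
    (s : Finset (Fin n)) (h : ind s * A * ind s = ind s * Bᴴ * ind s) :
    ∃ c : ℂ, ind s * A * ind s = c • ind s := by
  rcases Nat.eq_zero_or_pos n with hn | hn
  · exact ⟨0, by subst hn; ext i j; exact i.elim0⟩
  refine ⟨A ⟨0, hn⟩ ⟨0, hn⟩, ?_⟩
  ext i j
  rw [ind_mul_mul]
  have hsmul : (A ⟨0, hn⟩ ⟨0, hn⟩ • ind s) i j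
      = A ⟨0, hn⟩ ⟨0, hn⟩ * (if i = j then (if i ∈ s then 1 else 0) else 0) := by
    rw [ind, Matrix.smul_apply, Matrix.diagonal_apply]
    simp
  rw [hsmul]
  rcases lt_trichotomy i j with hij | hij | hij
  · -- i < j : use the adjoint equation, Bᴴ i j = conj (B j i) = 0
    have := congrFun (congrFun h i) j
    rw [ind_mul_mul, ind_mul_mul, Matrix.conjTranspose_apply, hB.1 j i hij] at this
    rw [this]
    simp [ne_of_lt hij]
  · subst hij
    by_cases hi : i ∈ s
    · simp [hi, hA.2 i ⟨0, hn⟩]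
    · simp [hi]
  · rw [hA.1 i j hij]
    simp [ne_of_gt hij]

lemma Tn_isOpAlg_aux {n : ℕ} {A B : Mat n} (hA : A ∈ Tn n) (hB : B ∈ Tn n) :
    A * B ∈ Tn n := by
  have hdiag : ∀ i : Fin n, (A * B) i i = A i i * B i i := by
    intro i
    rw [Matrix.mul_apply, Finset.sum_eq_single i]
    · intro k _ hk
      rcases lt_or_gt_of_ne hk with h | h
      · rw [hA.1 i k h, zero_mul]
      · rw [hB.1 k i h, mul_zero]
    · simp
  constructor
  · intro i j hji
    rw [Matrix.mul_apply]
    refine Finset.sum_eq_zero fun k _ => ?_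
    by_cases hk : k < i
    · rw [hA.1 i k hk, zero_mul]
    · rw [hB.1 k j (lt_of_lt_of_le hji (not_lt.1 hk)), mul_zero]
  · intro i j
    rw [hdiag i, hdiag j, hA.2 i j, hB.2 i j]

lemma Tn_isOpAlg (n : ℕ) :
    (0 : Mat n) ∈ Tn n ∧ (∀ A ∈ Tn n, ∀ B ∈ Tn n, A + B ∈ Tn n) ∧
    (∀ (c : ℂ), ∀ A ∈ Tn n, c • A ∈ Tn n) ∧ (∀ A ∈ Tn n, ∀ B ∈ Tn n, A * B ∈ Tn n) := by
  refine ⟨⟨fun _ _ _ => rfl, fun _ _ => rfl⟩, ?_, ?_, fun A hA B hB => Tn_isOpAlg_aux hA hB⟩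
  · rintro A ⟨hA1, hA2⟩ B ⟨hB1, hB2⟩
    exact ⟨fun i j h => by simp [Matrix.add_apply, hA1 i j h, hB1 i j h],
      fun i j => by simp [Matrix.add_apply, hA2 i j, hB2 i j]⟩
  · rintro c A ⟨hA1, hA2⟩
    exact ⟨fun i j h => by simp [Matrix.smul_apply, hA1 i j h],
      fun i j => by simp [Matrix.smul_apply, hA2 i j]⟩

lemma one_mem_Tn (n : ℕ) : (1 : Mat n) ∈ Tn n := by
  constructor
  · intro i j h; exact Matrix.one_apply_ne (ne_of_gt h)
  · intro i j; simp

lemma sub_mem_opAlg {n : ℕ} {S : Set (Mat n)} (hS : IsOpAlg S) {A B : Mat n}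
    (hA : A ∈ S) (hB : B ∈ S) : A - B ∈ S := by
  have := hS.2.1 A hA _ (hS.2.2.1 (-1 : ℂ) B hB)
  simpa [sub_eq_add_neg] using this

lemma pow_mem_opAlg {n : ℕ} {S : Set (Mat n)} (hS : IsOpAlg S) (h1 : (1 : Mat n) ∈ S)
    {D : Mat n} (hD : D ∈ S) : ∀ m : ℕ, D ^ m ∈ S := by
  intro m
  induction m with
  | zero => simpa using h1
  | succ k ih => rw [pow_succ]; exact hS.2.2.2 _ ih _ hD

lemma aeval_mem_opAlg {n : ℕ} {S : Set (Mat n)} (hS : IsOpAlg S) (h1 : (1 : Mat n) ∈ S)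
    {D : Mat n} (hD : D ∈ S) (p : Polynomial ℂ) : Polynomial.aeval D p ∈ S := by
  rw [Polynomial.aeval_eq_sum_range]
  refine Finset.sum_induction _ (· ∈ S) (fun a b ha hb => hS.2.1 a ha b hb) hS.1 ?_
  intro i _
  exact hS.2.2.1 _ _ (pow_mem_opAlg hS h1 hD i)

-- conjugate of a diagonal matrix is a polynomial in it
lemma conj_diag_poly {n : ℕ} (d : Fin n → ℂ) :
    ∃ p : Polynomial ℂ, Polynomial.aeval (Matrix.diagonal d) p = (Matrix.diagonal d)ᴴ := by
  classical
  set s : Finset ℂ := Finset.image d Finset.univ with hs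
  refine ⟨Lagrange.interpolate s id (starRingEnd ℂ), ?_⟩
  have heval : ∀ x ∈ s, Polynomial.eval x (Lagrange.interpolate s id (starRingEnd ℂ))
      = starRingEnd ℂ x := by
    intro x hx
    exact Lagrange.eval_interpolate_at_node _ (Set.injOn_id _) hx
  have key : Polynomial.aeval (Matrix.diagonal d) (Lagrange.interpolate s id (starRingEnd ℂ))
      = Matrix.diagonal (fun i => starRingEnd ℂ (d i)) := by
    have h1 : Matrix.diagonal d = Matrix.diagonalAlgHom (n := Fin n) (α := ℂ) ℂ d := rfl
    rw [h1, Polynomial.aeval_algHom_apply]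
    have h2 : Polynomial.aeval d (Lagrange.interpolate s id (starRingEnd ℂ))
        = fun i => starRingEnd ℂ (d i) := by
      funext i
      rw [Polynomial.aeval_fn_apply]
      have h5 : Polynomial.aeval (d i) (Lagrange.interpolate s id (starRingEnd ℂ))
          = Polynomial.eval (d i) (Lagrange.interpolate s id (starRingEnd ℂ)) := by
        rw [Polynomial.aeval_def, Polynomial.eval, Algebra.algebraMap_self]
      rw [h5]
      exact heval (d i) (by simp [hs])
    rw [h2]; rfl
  rw [key, Matrix.diagonal_conjTranspose]
  rfl

lemma std_apply {n : ℕ} (a b x y : Fin n) (c : ℂ) :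
    Matrix.single a b c x y = if a = x ∧ b = y then c else 0 := rfl

lemma not_antisym_of_proper {n : ℕ} {S : Set (Mat n)} (hS : IsOpAlg S)
    (hsub : Tn n ⊆ S) (hne : Tn n ≠ S) : ¬ Antisym S := by
  intro hAnti
  have hex : ∃ B ∈ S, B ∉ Tn n := by
    by_contra h
    push_neg at h
    exact hne (Set.Subset.antisymm hsub fun B hB => h B hB)
  obtain ⟨B, hBS, hBT⟩ := hex
  have h1S : (1 : Mat n) ∈ S := hsub (one_mem_Tn n)
  by_cases hlow : ∀ i j : Fin n, j < i → B i j = 0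
  · -- B is upper triangular but has nonconstant diagonal
    have hd : ∃ i j : Fin n, B i i ≠ B j j := by
      by_contra h; push_neg at h; exact hBT ⟨hlow, h⟩
    obtain ⟨i, j, hij⟩ := hd
    set U : Mat n := Matrix.of (fun x y => if x < y then B x y else 0) with hU
    have hUT : U ∈ Tn n :=
      ⟨fun a b h => by simp [hU, asymm h], fun a b => by simp [hU]⟩
    set D : Mat n := B - U with hDdef
    have hDS : D ∈ S := sub_mem_opAlg hS hBS (hsub hUT)
    have hD : D = Matrix.diagonal (fun x => B x x) := by
      ext x y
      rw [hDdef, Matrix.sub_apply, hU]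
      rcases lt_trichotomy x y with h | h | h
      · simp [h, Matrix.diagonal_apply_ne _ (ne_of_lt h)]
      · subst h; simp [lt_irrefl]
      · simp [asymm h, hlow x y h, Matrix.diagonal_apply_ne _ (ne_of_gt h)]
    obtain ⟨p, hp⟩ := conj_diag_poly (fun x => B x x)
    have hDcT : Dᴴ ∈ S := by
      rw [hD, ← hp]
      exact aeval_mem_opAlg hS h1S (hD ▸ hDS) p
    obtain ⟨c, hc⟩ := hAnti D hDS hDcT
    have e1 : B i i = c := by
      have := congrFun (congrFun hc i) i
      rw [hD] at this
      simpa using this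
    have e2 : B j j = c := by
      have := congrFun (congrFun hc j) j
      rw [hD] at this
      simpa using this
    exact hij (e1.trans e2.symm)
  · -- B has a nonzero entry below the diagonal
    push_neg at hlow
    obtain ⟨i, j, hji, hBij⟩ := hlow
    set Q : Mat n := Matrix.single j i 1 * B with hQdef
    have hQS : Q ∈ S := hS.2.2.2 _ (hsub (std_mem_Tn hji)) _ hBS
    have hQ : ∀ x y, Q x y = if x = j then B i y else 0 := by
      intro x y
      rw [hQdef, Matrix.mul_apply, Finset.sum_eq_single i]
      · rcases eq_or_ne x j with rfl | hx
        · simp [Matrix.single]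
        · simp [Matrix.single, hx, Ne.symm hx]
      · intro k _ hk; simp [Matrix.single, (Ne.symm hk : i ≠ k)]
      · simp
    set U : Mat n := Matrix.of (fun x y => if x < y then Q x y else 0) with hU
    have hUT : U ∈ Tn n :=
      ⟨fun a b h => by simp [hU, asymm h], fun a b => by simp [hU]⟩
    set M : Mat n := Q - U with hMdef
    have hMS : M ∈ S := sub_mem_opAlg hS hQS (hsub hUT)
    have hM : ∀ x y, M x y = if x < y then 0 else Q x y := by
      intro x y
      rw [hMdef, Matrix.sub_apply, hU]
      by_cases h : x < y <;> simp [h]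
    have hMjj : M j j = B i j := by rw [hM, if_neg (lt_irrefl j), hQ, if_pos rfl]
    have hstd : Matrix.single j j (1:ℂ) ∈ S := by
      by_cases hz : ∀ b : Fin n, b < j → M j b = 0
      · have hMeq : M = B i j • Matrix.single j j 1 := by
          ext x y
          rw [hM, Matrix.smul_apply, std_apply, smul_eq_mul]
          by_cases hx : j = x
          · subst hx
            rcases lt_trichotomy j y with h | h | h
            · rw [if_pos h, if_neg (fun hh => absurd hh.2 (ne_of_lt h)), mul_zero]
            · subst h
              rw [if_neg (lt_irrefl j), if_pos ⟨rfl, rfl⟩, mul_one, hQ, if_pos rfl]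
            · have hz' := hz y h
              rw [hM, if_neg (asymm h)] at hz'
              rw [if_neg (asymm h), hz',
                if_neg (fun hh => absurd hh.2.symm (ne_of_lt h)), mul_zero]
          · have hQxy : Q x y = 0 := by
              rw [hQ]; exact if_neg (fun hh => hx hh.symm)
            rw [if_neg (fun hh : j = x ∧ j = y => hx hh.1), mul_zero, hQxy]
            split <;> rfl
        have h2 := hS.2.2.1 (B i j)⁻¹ M hMS
        rwa [hMeq, smul_smul, inv_mul_cancel₀ hBij, one_smul] at h2
      · push_neg at hz
        obtain ⟨b, hbj, hMb⟩ := hz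
        set N : Mat n := M * Matrix.single b j 1 with hNdef
        have hNS : N ∈ S := hS.2.2.2 _ hMS _ (hsub (std_mem_Tn hbj))
        have hN : N = M j b • Matrix.single j j 1 := by
          ext x y
          rw [hNdef, Matrix.mul_apply, Finset.sum_eq_single b, Matrix.smul_apply,
            std_apply, std_apply, smul_eq_mul]
          · by_cases hx : j = x
            · subst hx
              by_cases hy : j = y <;> simp [hy]
            · have hMxb : M x b = 0 := by
                have hQxb : Q x b = 0 := by
                  rw [hQ]; exact if_neg (fun hh => hx hh.symm)
                rw [hM, hQxb]; split <;> rfl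
              rw [hMxb, zero_mul, if_neg (fun hh : j = x ∧ j = y => hx hh.1), mul_zero]
          · intro k _ hk
            rw [std_apply, if_neg (fun hh => hk hh.1.symm), mul_zero]
          · simp
        have h2 := hS.2.2.1 (M j b)⁻¹ N hNS
        rwa [hN, smul_smul, inv_mul_cancel₀ hMb, one_smul] at h2
    have hstdH : (Matrix.single j j (1:ℂ))ᴴ = Matrix.single j j (1:ℂ) := by
      ext x y
      rw [Matrix.conjTranspose_apply, std_apply, std_apply]
      simp [apply_ite (star : ℂ → ℂ), and_comm]
    obtain ⟨c, hc⟩ := hAnti _ hstd (by rw [hstdH]; exact hstd)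
    have e1 : (1:ℂ) = c := by
      have := congrFun (congrFun hc j) j
      simpa [std_apply, Matrix.one_apply] using this
    have e2 : (0:ℂ) = c := by
      have := congrFun (congrFun hc i) i
      simpa [std_apply, (ne_of_lt hji : j ≠ i), Matrix.one_apply] using this
    exact one_ne_zero (e1.trans e2.symm)

/-! ### Glue lemmas -/

lemma compr_Csub {n : ℕ} (s : Finset (Fin n)) (A : Mat n) :
    compr (Csub s) A = opOf (ind s * A * ind s) := by
  rw [compr, oproj_Csub, opOf_mul, opOf_mul]
  rfl

lemma adjoint_compr_Csub {n : ℕ} (s : Finset (Fin n)) (B : Mat n) :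
    adjoint (compr (Csub s) B) = opOf (ind s * Bᴴ * ind s) := by
  rw [compr_Csub, adjoint_opOf, Matrix.conjTranspose_mul, Matrix.conjTranspose_mul,
    ind_conjTranspose, mul_assoc]

lemma ind_univ {n : ℕ} : ind (Finset.univ : Finset (Fin n)) = 1 := by
  rw [ind]
  simp [Matrix.diagonal_one]

lemma Tn_herAntisym (n : ℕ) : HerAntisym (Tn n) := by
  intro E hE A hA B hB h
  obtain ⟨E₁, E₂, hE₁, hE₂, -, rfl⟩ := hE
  obtain ⟨k, hk⟩ := invariant_classify hE₁
  obtain ⟨l, hl⟩ := invariant_classify hE₂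
  have hEeq : E₁ ⊓ E₂ᗮ =
      Csub ((Finset.univ.filter (fun j : Fin n => (j:ℕ) < k)) ∩
        (Finset.univ.filter (fun j : Fin n => (j:ℕ) < l))ᶜ) := by
    rw [hk, hl, Csub_orthogonal, Csub_inf]
  rw [hEeq] at h ⊢
  rw [compr_Csub, adjoint_compr_Csub] at h
  obtain ⟨c, hc⟩ := compression_antisym hA hB _ (opOf_inj h)
  refine ⟨c, ?_⟩
  rw [compr_Csub, hc, oproj_Csub, opOf_smul]

lemma herAntisym_antisym {n : ℕ} {S : Set (Mat n)} (hHer : HerAntisym S) : Antisym S := by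
  intro A hA hAH
  have htop : (⊤ : Submodule ℂ (Euc n)) = Csub Finset.univ := Csub_univ.symm
  have hsemi : SemiInvariantSub S ⊤ := by
    refine ⟨⊤, ⊥, fun A _ x _ => trivial, ?_, bot_le, ?_⟩
    · intro A _ x hx
      rw [Submodule.mem_bot] at hx
      subst hx
      rw [_root_.map_zero]
      exact Submodule.zero_mem ⊥
    · rw [Submodule.bot_orthogonal_eq_top, inf_top_eq]
  have hcompr : ∀ M : Mat n, compr ⊤ M = opOf M := by
    intro M
    rw [htop, compr_Csub, ind_univ, one_mul, mul_one]
  have hadj : compr ⊤ A = adjoint (compr ⊤ Aᴴ) := by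
    rw [hcompr, hcompr, adjoint_opOf, Matrix.conjTranspose_conjTranspose]
  obtain ⟨c, hc⟩ := hHer ⊤ hsemi A hA Aᴴ hAH hadj
  refine ⟨c, opOf_inj ?_⟩
  rw [← hcompr A, hc, htop, oproj_Csub, ind_univ, opOf_smul]

/-- `𝒯ₙ` is a hereditarily antisymmetric operator algebra, and every operator algebra properly
containing it fails to be antisymmetric; in particular `𝒯ₙ` is maximal hereditarily
antisymmetric. -/
theorem Tn_hereditarilyAntisym_and_maximal (n : ℕ) :
    IsOpAlg (Tn n) ∧ HerAntisym (Tn n) ∧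
      (∀ S : Set (Mat n), IsOpAlg S → Tn n ⊆ S → Tn n ≠ S → ¬ Antisym S) ∧
      (∀ S : Set (Mat n), IsOpAlg S → Tn n ⊆ S → Tn n ≠ S → ¬ HerAntisym S) := by
  refine ⟨Tn_isOpAlg n, Tn_herAntisym n,
    fun S hS hsub hne => not_antisym_of_proper hS hsub hne,
    fun S hS hsub hne hHer => not_antisym_of_proper hS hsub hne (herAntisym_antisym hHer)⟩
end
end

section
/- Let n > 2 and let v = (v₁,…,vₙ) be a basis of ℂⁿ whose nonorthogonality graph is connected. Then 𝒟_v is not maximal antisymmetric: there exists an antisymmetric operator algebra in Mₙ(ℂ) that properly contains 𝒟_v. -/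
open Matrix ContinuousLinearMap

noncomputable section

/-- `𝒟_v`: the matrices for which every `vᵢ` is an eigenvector. -/
def Dv {n : ℕ} (v : Module.Basis (Fin n) ℂ (Euc n)) : Set (Mat n) :=
  {A | ∀ i : Fin n, ∃ μ : ℂ, opOf A (v i) = μ • v i}

set_option maxHeartbeats 1000000 in
set_option synthInstance.maxHeartbeats 1000000 in
private lemma walk_const {V : Type*} {G : SimpleGraph V} {q : V} (f : V → ℂ)
    (hstep : ∀ a b, G.Adj a b → a ≠ q → b ≠ q → f a = f b) :
    ∀ {a b : V} (W : G.Walk a b), q ∉ W.support → f a = f b := by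
  intro a b W
  induction W with
  | nil => intro _; rfl
  | @cons u x w h W ih =>
      intro hs
      rw [SimpleGraph.Walk.support_cons] at hs
      have h1 : q ∉ W.support := fun hq => hs (List.mem_cons_of_mem _ hq)
      have hu : u ≠ q := fun e => hs (by rw [e]; exact List.mem_cons_self)
      have hx : x ≠ q := fun e => h1 (by rw [← e] at h1 ⊢; exact W.start_mem_support)
      exact (hstep u x h hu hx).trans (ih h1)

private lemma hub_exists {V : Type*} [Fintype V] {G : SimpleGraph V} (hG : G.Connected)
    (u₀ : V) : ∃ q : V, ∀ w : V, w ≠ q → ∃ W : G.Walk w u₀, q ∉ W.support := by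
  have : Nonempty V := ⟨u₀⟩
  haveI := Classical.decEq V
  obtain ⟨q, hq⟩ := Finite.exists_max (fun w => G.dist u₀ w)
  refine ⟨q, fun w hw => ?_⟩
  obtain ⟨W, hW⟩ := (hG w u₀).exists_walk_length_eq_dist
  by_cases hmem : q ∈ W.support
  · exfalso
    have h1 := SimpleGraph.dist_le (W.takeUntil q hmem)
    have h2 := SimpleGraph.dist_le (W.dropUntil q hmem)
    have hlen : (W.takeUntil q hmem).length + (W.dropUntil q hmem).length = W.length := by
      rw [← SimpleGraph.Walk.length_append, SimpleGraph.Walk.take_spec]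
    have hd1 : G.dist w u₀ = G.dist u₀ w := SimpleGraph.dist_comm ..
    have hd2 : G.dist q u₀ = G.dist u₀ q := SimpleGraph.dist_comm ..
    have hpos : 0 < G.dist w q := (hG w q).pos_dist_of_ne hw
    have hle := hq w
    omega
  · exact ⟨W, hmem⟩

set_option maxHeartbeats 4000000 in
set_option synthInstance.maxHeartbeats 1000000 in
/-- If `n > 2` and `v` is a basis of `ℂⁿ` with connected nonorthogonality graph, then `𝒟_v`
is not maximal antisymmetric: some antisymmetric operator algebra properly contains it. -/
theorem Dv_not_maximal_antisym (n : ℕ) (hn : 2 < n) (v : Module.Basis (Fin n) ℂ (Euc n))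
    (hconn : (SimpleGraph.fromRel fun i j : Fin n => (inner ℂ (v i) (v j) : ℂ) ≠ 0).Connected) :
    ∃ S : Set (Mat n), IsOpAlg S ∧ Antisym S ∧ Dv v ⊆ S ∧ Dv v ≠ S := by
  classical
  set G : SimpleGraph (Fin n) :=
    SimpleGraph.fromRel fun i j : Fin n => (inner ℂ (v i) (v j) : ℂ) ≠ 0 with hGdef
  haveI : Nontrivial (Fin n) :=
    ⟨⟨0, by omega⟩, ⟨1, by omega⟩, fun h => by simpa using congrArg Fin.val h⟩
  have hgc : ∀ i j : Fin n, (starRingEnd ℂ) (inner ℂ (v i) (v j) : ℂ) = inner ℂ (v j) (v i) :=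
    fun i j => inner_conj_symm _ _
  have hgii : ∀ i : Fin n, (inner ℂ (v i) (v i) : ℂ) ≠ 0 := by
    intro i h
    exact v.ne_zero i (inner_self_eq_zero.mp h)
  have hadj : ∀ i j : Fin n, G.Adj i j → (inner ℂ (v i) (v j) : ℂ) ≠ 0 := by
    intro i j hij
    rw [hGdef, SimpleGraph.fromRel_adj] at hij
    rcases hij.2 with h | h
    · exact h
    · intro h0
      exact h (by rw [← hgc i j, h0, map_zero])
  -- a hub vertex `q`
  let u₀ : Fin n := ⟨0, by omega⟩
  obtain ⟨q, hq⟩ := hub_exists hconn u₀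
  have hqu : q ≠ u₀ := by
    intro h
    obtain ⟨w, hw⟩ := exists_ne q
    obtain ⟨W, hWs⟩ := hq w hw
    exact hWs (by rw [h]; exact W.end_mem_support)
  -- q has a neighbour
  have hqadj : ∃ s : Fin n, s ≠ q ∧ (inner ℂ (v s) (v q) : ℂ) ≠ 0 := by
    obtain ⟨t, ht⟩ := exists_ne q
    obtain ⟨W⟩ := hconn.preconnected q t
    cases W with
    | nil => exact absurd rfl ht.symm
    | @cons _ s _ h W' =>
        rw [hGdef, SimpleGraph.fromRel_adj] at h
        refine ⟨s, Ne.symm h.1, ?_⟩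
        rcases h.2 with h2 | h2
        · intro h0; exact h2 (by rw [← hgc s q, h0, map_zero])
        · exact h2
  -- choose p, r with the determinant condition
  have hpr : ∃ p r : Fin n, p ≠ q ∧ r ≠ q ∧ r ≠ p ∧
      (inner ℂ (v q) (v r) : ℂ) * inner ℂ (v p) (v p)
        - (inner ℂ (v q) (v p) : ℂ) * inner ℂ (v p) (v r) ≠ 0 := by
    by_contra hcon
    push_neg at hcon
    have step1 : ∀ pp : Fin n, pp ≠ q → ∀ rr : Fin n, rr ≠ q →
        (inner ℂ (v q - ((inner ℂ (v pp) (v q) : ℂ) / inner ℂ (v pp) (v pp)) • v pp) (v rr) : ℂ)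
          = 0 := by
      intro pp hpp rr hrr
      rw [inner_sub_left, inner_smul_left, map_div₀, hgc pp q, hgc pp pp]
      have hppne := hgii pp
      by_cases hre : rr = pp
      · subst hre
        rw [div_mul_cancel₀ _ hppne, sub_self]
      · have h0 := hcon pp rr hpp hrr hre
        rw [div_mul_eq_mul_div, sub_eq_zero, eq_comm, div_eq_iff hppne]
        linear_combination -h0
    obtain ⟨p₁, hp₁⟩ := exists_ne q
    have hp₂ : ∃ p₂ : Fin n, p₂ ≠ q ∧ p₂ ≠ p₁ := by
      by_contra hx
      push_neg at hx
      have hsub : (Finset.univ : Finset (Fin n)) ⊆ {q, p₁} := by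
        intro x _
        rcases eq_or_ne x q with h | h
        · simp [h]
        · simp [hx x h]
      have hcard := Finset.card_le_card hsub
      have h2 : ({q, p₁} : Finset (Fin n)).card ≤ 2 :=
        (Finset.card_insert_le _ _).trans (by simp)
      simp only [Finset.card_univ, Fintype.card_fin] at hcard
      omega
    obtain ⟨p₂, hp₂q, hp₂₁⟩ := hp₂
    have key : ∀ pa pb : Fin n, pa ≠ q → pb ≠ q → pb ≠ pa →
        (inner ℂ (v pa) (v q) : ℂ) = 0 := by
      intro pa pb ha hb hba
      set s₁ : ℂ := (inner ℂ (v pa) (v q) : ℂ) / inner ℂ (v pa) (v pa) with hs₁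
      set s₂ : ℂ := (inner ℂ (v pb) (v q) : ℂ) / inner ℂ (v pb) (v pb) with hs₂
      have hdr : ∀ rr, rr ≠ q →
          (inner ℂ ((v q - s₁ • v pa) - (v q - s₂ • v pb)) (v rr) : ℂ) = 0 := by
        intro rr hrr
        rw [inner_sub_left, step1 pa ha rr hrr, step1 pb hb rr hrr, sub_zero]
      have hdd : (v q - s₁ • v pa) - (v q - s₂ • v pb) = 0 := by
        rw [← inner_self_eq_zero (𝕜 := ℂ)]
        have hd2 : (v q - s₁ • v pa) - (v q - s₂ • v pb) = s₂ • v pb - s₁ • v pa := by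
          module
        calc (inner ℂ ((v q - s₁ • v pa) - (v q - s₂ • v pb))
                ((v q - s₁ • v pa) - (v q - s₂ • v pb)) : ℂ)
            = inner ℂ ((v q - s₁ • v pa) - (v q - s₂ • v pb)) (s₂ • v pb - s₁ • v pa) := by
              rw [← hd2]
          _ = s₂ * inner ℂ ((v q - s₁ • v pa) - (v q - s₂ • v pb)) (v pb)
              - s₁ * inner ℂ ((v q - s₁ • v pa) - (v q - s₂ • v pb)) (v pa) := by
              rw [inner_sub_right, inner_smul_right, inner_smul_right]
          _ = 0 := by rw [hdr pa ha, hdr pb hb]; ring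
      have h0 : s₁ • v pa = s₂ • v pb := by
        have h3 : s₂ • v pb - s₁ • v pa = v q - s₁ • v pa - (v q - s₂ • v pb) := by module
        rw [hdd] at h3
        exact (sub_eq_zero.mp h3).symm
      have h1 : s₁ = 0 := by
        have h2 := congrArg (fun x => v.repr x pa) h0
        simpa [Module.Basis.repr_self, Finsupp.single_apply, hba] using h2
      rw [hs₁, div_eq_zero_iff] at h1
      exact h1.resolve_right (hgii pa)
    obtain ⟨s, hsq, hs0⟩ := hqadj
    rcases eq_or_ne s p₁ with h | h
    · exact hs0 (key s p₂ hsq hp₂q (by rw [h]; exact hp₂₁))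
    · exact hs0 (key s p₁ hsq hp₁ (fun e => h e.symm))
  obtain ⟨p, r, hpq, hrq, hrp, hdet⟩ := hpr
  -- the nilpotent matrix E
  set E : Mat n := (Matrix.toEuclideanCLM (𝕜 := ℂ)).symm
      (LinearMap.toContinuousLinearMap (v.constr ℂ fun i => if i = q then v p else 0))
      with hEdef
  have hEv : ∀ i, opOf E (v i) = if i = q then v p else 0 := by
    intro i
    show (Matrix.toEuclideanCLM (𝕜 := ℂ) E) (v i) = _
    rw [hEdef, StarAlgEquiv.apply_symm_apply]
    simp [Module.Basis.constr_basis]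
  have opEq : ∀ A B : Mat n, (∀ i, opOf A (v i) = opOf B (v i)) → A = B := by
    intro A B h
    apply (Matrix.toEuclideanCLM (𝕜 := ℂ)).injective
    apply ContinuousLinearMap.coe_injective
    exact Module.Basis.ext v fun i => h i
  have op_mul_apply : ∀ (X Y : Mat n) (x : Euc n), opOf (X * Y) x = opOf X (opOf Y x) := by
    intro X Y x; simp only [opOf, _root_.map_mul, ContinuousLinearMap.mul_apply]
  have op_add_apply : ∀ (X Y : Mat n) (x : Euc n), opOf (X + Y) x = opOf X x + opOf Y x := by
    intro X Y x; simp only [opOf, map_add, ContinuousLinearMap.add_apply]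
  have op_smul_apply : ∀ (a : ℂ) (X : Mat n) (x : Euc n), opOf (a • X) x = a • opOf X x := by
    intro a X x
    have h : opOf (a • X) = a • opOf X := _root_.map_smul _ a X
    rw [h, ContinuousLinearMap.smul_apply]
  have op_zero_apply : ∀ x : Euc n, opOf (0 : Mat n) x = 0 := by
    intro x; simp [opOf]
  -- closure facts about Dv
  have hDv0 : (0 : Mat n) ∈ Dv v := fun i => ⟨0, by rw [op_zero_apply, zero_smul]⟩
  have hDvadd : ∀ D₁ ∈ Dv v, ∀ D₂ ∈ Dv v, D₁ + D₂ ∈ Dv v := by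
    intro D₁ h₁ D₂ h₂ i
    obtain ⟨a, ha⟩ := h₁ i; obtain ⟨b, hb⟩ := h₂ i
    exact ⟨a + b, by rw [op_add_apply, ha, hb, add_smul]⟩
  have hDvsmul : ∀ (a : ℂ), ∀ D ∈ Dv v, a • D ∈ Dv v := by
    intro a D h i; obtain ⟨μ, hμ⟩ := h i
    exact ⟨a * μ, by rw [op_smul_apply, hμ, smul_smul]⟩
  have hDvmul : ∀ D₁ ∈ Dv v, ∀ D₂ ∈ Dv v, D₁ * D₂ ∈ Dv v := by
    intro D₁ h₁ D₂ h₂ i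
    obtain ⟨b, hb⟩ := h₂ i; obtain ⟨a, ha⟩ := h₁ i
    exact ⟨a * b, by rw [op_mul_apply, hb, ContinuousLinearMap.map_smul, ha, smul_smul, mul_comm b a]⟩
  -- interaction of E with Dv
  have hDE : ∀ D ∈ Dv v, ∃ μ : ℂ, D * E = μ • E := by
    intro D hD
    obtain ⟨μ, hμ⟩ := hD p
    refine ⟨μ, opEq _ _ fun i => ?_⟩
    rw [op_mul_apply, hEv i, op_smul_apply, hEv i]
    by_cases hi : i = q
    · rw [if_pos hi, hμ]
    · rw [if_neg hi, (opOf D).map_zero, smul_zero]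
  have hED : ∀ D ∈ Dv v, ∃ μ : ℂ, E * D = μ • E := by
    intro D hD
    obtain ⟨μ, hμ⟩ := hD q
    refine ⟨μ, opEq _ _ fun i => ?_⟩
    rw [op_mul_apply, op_smul_apply, hEv i]
    by_cases hi : i = q
    · rw [if_pos hi, hi, hμ, ContinuousLinearMap.map_smul, hEv q, if_pos rfl]
    · obtain ⟨ν, hν⟩ := hD i
      rw [if_neg hi, hν, ContinuousLinearMap.map_smul, hEv i, if_neg hi, smul_zero, smul_zero]
  have hEE : E * E = 0 := by
    refine opEq _ _ fun i => ?_
    rw [op_mul_apply, hEv i, op_zero_apply]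
    by_cases hi : i = q
    · rw [if_pos hi, hEv p, if_neg hpq]
    · rw [if_neg hi, (opOf E).map_zero]
  refine ⟨{A : Mat n | ∃ D ∈ Dv v, ∃ c : ℂ, A = D + c • E}, ?_, ?_, ?_, ?_⟩
  · -- operator algebra
    refine ⟨⟨0, hDv0, 0, by simp⟩, ?_, ?_, ?_⟩
    · rintro A ⟨D₁, h₁, c₁, rfl⟩ B ⟨D₂, h₂, c₂, rfl⟩
      exact ⟨D₁ + D₂, hDvadd _ h₁ _ h₂, c₁ + c₂, by rw [add_smul]; abel⟩
    · rintro a A ⟨D, h, c, rfl⟩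
      exact ⟨a • D, hDvsmul a _ h, a * c, by rw [smul_add, smul_smul]⟩
    · rintro A ⟨D₁, h₁, c₁, rfl⟩ B ⟨D₂, h₂, c₂, rfl⟩
      obtain ⟨μ, hμ⟩ := hDE D₁ h₁
      obtain ⟨ν, hν⟩ := hED D₂ h₂
      refine ⟨D₁ * D₂, hDvmul _ h₁ _ h₂, c₁ * ν + c₂ * μ, ?_⟩
      rw [mul_add, add_mul, add_mul, mul_smul_comm, smul_mul_assoc, smul_mul_assoc,
        mul_smul_comm, hμ, hν, hEE, smul_zero, smul_zero, add_zero, smul_smul, smul_smul,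
        add_smul]
      abel
  · -- antisymmetry
    rintro A ⟨D, hD, c, rfl⟩ hAH
    obtain ⟨D', hD', c', hH⟩ := hAH
    have hD2 : ∀ i, ∃ μ : ℂ, opOf D (v i) = μ • v i := hD
    have hD'2 : ∀ i, ∃ μ : ℂ, opOf D' (v i) = μ • v i := hD'
    choose lam hlam using hD2
    choose lam' hlam' using hD'2
    have inner0 : ∀ i j : Fin n,
        (inner ℂ (opOf ((D + c • E)ᴴ) (v i)) (v j) : ℂ)
          = inner ℂ (v i) (opOf (D + c • E) (v j)) := by
      intro i j
      rw [show opOf ((D + c • E)ᴴ) = ContinuousLinearMap.adjoint (opOf (D + c • E)) from by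
        rw [← Matrix.star_eq_conjTranspose, ← ContinuousLinearMap.star_eq_adjoint]
        exact map_star _ _]
      exact ContinuousLinearMap.adjoint_inner_left _ _ _
    have master : ∀ i j : Fin n,
        (starRingEnd ℂ) (lam' i) * inner ℂ (v i) (v j)
          + (starRingEnd ℂ) c' * (if i = q then (inner ℂ (v p) (v j) : ℂ) else 0)
        = lam j * inner ℂ (v i) (v j)
          + c * (if j = q then (inner ℂ (v i) (v p) : ℂ) else 0) := by
      intro i j
      have h1 := inner0 i j
      rw [hH] at h1
      rw [op_add_apply, op_add_apply, op_smul_apply, op_smul_apply, hlam' i, hlam j,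
        hEv i, hEv j] at h1
      by_cases hi : i = q <;> by_cases hj : j = q <;>
        simp only [hi, hj, if_true, if_false, eq_self_iff_true, if_pos, if_neg,
          not_false_iff, smul_zero, add_zero, inner_add_left, inner_add_right,
          inner_smul_left, inner_smul_right, inner_zero_left, inner_zero_right,
          mul_zero] at h1 ⊢ <;>
        exact h1
    have key1 : ∀ i, i ≠ q → (starRingEnd ℂ) (lam' i) = lam i := by
      intro i hi
      have h1 := master i i
      rw [if_neg hi, if_neg hi, mul_zero, mul_zero, add_zero, add_zero] at h1
      exact mul_right_cancel₀ (hgii i) h1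
    have stepc : ∀ a b, G.Adj a b → a ≠ q → b ≠ q → lam a = lam b := by
      intro a b hab ha hb
      have h1 := master a b
      rw [if_neg ha, if_neg hb, mul_zero, mul_zero, add_zero, add_zero, key1 a ha] at h1
      exact mul_right_cancel₀ (hadj a b hab) h1
    have hconst : ∀ i, i ≠ q → lam i = lam u₀ := by
      intro i hi
      obtain ⟨W, hW⟩ := hq i hi
      exact walk_const lam stepc W hW
    set ν := lam u₀ with hνdef
    have h1 := master q p
    rw [if_pos rfl, if_neg hpq, mul_zero, add_zero, hconst p hpq] at h1
    have h2 := master q r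
    rw [if_pos rfl, if_neg hrq, mul_zero, add_zero, hconst r hrq] at h2
    have h3 : (ν - (starRingEnd ℂ) (lam' q)) *
        ((inner ℂ (v q) (v r) : ℂ) * inner ℂ (v p) (v p)
          - (inner ℂ (v q) (v p) : ℂ) * inner ℂ (v p) (v r)) = 0 := by
      linear_combination (inner ℂ (v p) (v r) : ℂ) * h1 - (inner ℂ (v p) (v p) : ℂ) * h2
    have hβν : (starRingEnd ℂ) (lam' q) = ν := by
      rcases mul_eq_zero.mp h3 with h | h
      · exact (sub_eq_zero.mp h).symm
      · exact absurd h hdet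
    have hcc : c' = 0 := by
      rw [hβν] at h1
      have h4 : (starRingEnd ℂ) c' * inner ℂ (v p) (v p) = 0 := by linear_combination h1
      have h5 := (mul_eq_zero.mp h4).resolve_right (hgii p)
      have h6 := congrArg (starRingEnd ℂ) h5
      simpa using h6
    have h4 := master p q
    rw [if_neg hpq, if_pos rfl, mul_zero, add_zero, key1 p hpq, hconst p hpq] at h4
    have h5 := master r q
    rw [if_neg hrq, if_pos rfl, mul_zero, add_zero, key1 r hrq, hconst r hrq] at h5
    have hdet' : (inner ℂ (v r) (v q) : ℂ) * inner ℂ (v p) (v p)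
        - (inner ℂ (v p) (v q) : ℂ) * inner ℂ (v r) (v p) ≠ 0 := by
      intro h0
      apply hdet
      have h6 := congrArg (starRingEnd ℂ) h0
      simp only [_root_.map_sub, _root_.map_mul, hgc, _root_.map_zero] at h6
      linear_combination h6
    have h6 : (ν - lam q) *
        ((inner ℂ (v r) (v q) : ℂ) * inner ℂ (v p) (v p)
          - (inner ℂ (v p) (v q) : ℂ) * inner ℂ (v r) (v p)) = 0 := by
      linear_combination (inner ℂ (v p) (v p) : ℂ) * h5 - (inner ℂ (v r) (v p) : ℂ) * h4
    have hlamq : lam q = ν := by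
      rcases mul_eq_zero.mp h6 with h | h
      · exact (sub_eq_zero.mp h).symm
      · exact absurd h hdet'
    have hc : c = 0 := by
      rw [hlamq] at h4
      have h7 : c * inner ℂ (v p) (v p) = 0 := by linear_combination -h4
      exact (mul_eq_zero.mp h7).resolve_right (hgii p)
    refine ⟨ν, ?_⟩
    have hallν : ∀ i, lam i = ν := by
      intro i
      by_cases hi : i = q
      · rw [hi, hlamq]
      · exact hconst i hi
    rw [hc, zero_smul, add_zero]
    refine opEq _ _ fun i => ?_
    rw [hlam i, hallν i, op_smul_apply]
    have : opOf (1 : Mat n) (v i) = v i := by simp [opOf]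
    rw [this]
  · -- Dv ⊆ S
    intro A hA
    exact ⟨A, hA, 0, by simp⟩
  · -- Dv ≠ S
    intro hEq
    have hES : E ∈ Dv v := by
      rw [hEq]
      exact ⟨0, hDv0, 1, by simp⟩
    obtain ⟨μ, hμ⟩ := hES q
    rw [hEv q, if_pos rfl] at hμ
    have h3 := congrArg (fun x => v.repr x p) hμ
    simp [Module.Basis.repr_self, Finsupp.single_apply, Ne.symm hpq] at h3
end
end

section
/- Let 𝒜 ⊆ Mₙ(ℂ) (n ≥ 1) be a nilpotent operator algebra. Then there is a natural number r such that: some quantum chain for 𝒜 has length r; every quantum chain for 𝒜 has length at most r; some ordered partition of ℂⁿ into quantum antichains for 𝒜 has size r; and every ordered partition of ℂⁿ into quantum antichains for 𝒜 has size at least r. (That is, the maximal length of a quantum chain equals the minimal size of an ordered partition into quantum antichains.) -/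
open Matrix ContinuousLinearMap

noncomputable section

/-- A quantum antichain: a nonzero semi-invariant subspace whose compression of the algebra
vanishes. -/
def QAntichain {n : ℕ} (S : Set (Mat n)) (E : Submodule ℂ (Euc n)) : Prop :=
  E ≠ ⊥ ∧ SemiInvariantSub S E ∧ ∀ A ∈ S, compr E A = 0

/-- A quantum chain of length `k`: nonzero vectors `v 0, …, v (k-1)` with each `v (i+1)` in
`𝒜 (v i)`. -/
def IsQChain {n : ℕ} (S : Set (Mat n)) (k : ℕ) (v : ℕ → Euc n) : Prop :=
  (∀ i < k, v i ≠ 0) ∧ ∀ i : ℕ, i + 1 < k → ∃ A ∈ S, v (i + 1) = opOf A (v i)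

/-- An ordered partition of `ℂⁿ` into `k` quantum antichains. -/
def OrderedQAPartition {n : ℕ} (S : Set (Mat n)) (k : ℕ)
    (E : Fin k → Submodule ℂ (Euc n)) : Prop :=
  (∀ i, QAntichain S (E i)) ∧
  (∀ i j : Fin k, i ≠ j → ∀ x ∈ E i, ∀ y ∈ E j, (inner ℂ x y : ℂ) = 0) ∧
  (⨆ i, E i) = ⊤ ∧
  (∀ i : Fin k, InvariantSub S (⨆ j ∈ Set.Iic i, E j))

open Module


lemma no_surj_nilpotent {V : Type} [AddCommGroup V] [Module ℂ V]
    (C : Module.End ℂ V) (hC : IsNilpotent C) (W : Submodule ℂ V)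
    (hW : W ≠ ⊥) (h : W ≤ W.map C) : False := by
  have key : ∀ k : ℕ, W ≤ W.map (C ^ k) := by
    intro k
    induction k with
    | zero => intro x hx; exact ⟨x, hx, by simp⟩
    | succ k ih =>
      calc W ≤ W.map C := h
        _ ≤ (W.map (C ^ k)).map C := Submodule.map_mono ih
        _ = W.map (C ^ (k+1)) := by rw [← Submodule.map_comp, pow_succ']; rfl
  obtain ⟨k, hk⟩ := hC
  have := key k
  rw [hk, Submodule.map_zero, le_bot_iff] at this
  exact hW this

lemma common_kernel : ∀ (N : ℕ), ∀ (V : Type) [AddCommGroup V] [Module ℂ V]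
    [FiniteDimensional ℂ V], finrank ℂ V ≤ N → 0 < finrank ℂ V →
    ∀ T : Set (Module.End ℂ V), (∀ f ∈ T, ∀ g ∈ T, f * g ∈ T) →
    (∀ f ∈ T, IsNilpotent f) →
    ∃ v : V, v ≠ 0 ∧ ∀ f ∈ T, f v = 0 := by
  intro N
  induction N using Nat.strong_induction_on with
  | _ N IH =>
  intro V _ _ _ hVN hVpos T hmul hnil
  classical
  by_cases hT0 : ∀ f ∈ T, f = 0
  · have : Nontrivial V := Module.nontrivial_of_finrank_pos hVpos
    obtain ⟨v, hv⟩ := exists_ne (0 : V)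
    exact ⟨v, hv, fun f hf => by rw [hT0 f hf]; rfl⟩
  · push_neg at hT0
    obtain ⟨B₀, hB₀T, hB₀⟩ := hT0
    have hP : ∃ m : ℕ, ∃ C, C ∈ T ∧ C ≠ 0 ∧ finrank ℂ (LinearMap.range C) = m :=
      ⟨_, B₀, hB₀T, hB₀, rfl⟩
    obtain ⟨B, hBT, hBne, hBrank⟩ := Nat.find_spec hP
    set r := Nat.find hP with hr
    have hmin : ∀ D : Module.End ℂ V, D ∈ T → D ≠ 0 →
        r ≤ finrank ℂ (LinearMap.range D) :=
      fun D hD hD0 => Nat.find_min' hP ⟨D, hD, hD0, rfl⟩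
    have hrangeB : LinearMap.range B ≠ ⊥ := by
      simpa [LinearMap.range_eq_bot] using hBne
    have squeeze : ∀ C : Module.End ℂ V, IsNilpotent C → C * B ∈ T →
        LinearMap.range (C * B) ≤ LinearMap.range B → C * B = 0 := by
      intro C hCnil hmem hle
      by_contra hne
      have h1 : r ≤ finrank ℂ (LinearMap.range (C * B)) := hmin _ hmem hne
      have h2 : LinearMap.range (C * B) = LinearMap.range B :=
        Submodule.eq_of_le_of_finrank_le hle (hBrank ▸ h1)
      have h3 : LinearMap.range (C * B) = (LinearMap.range B).map C := by
        rw [Module.End.mul_eq_comp, LinearMap.range_comp]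
      exact no_surj_nilpotent C hCnil (LinearMap.range B) hrangeB (by rw [← h3, h2])
    have hBB : B * B = 0 := by
      refine squeeze B (hnil B hBT) (hmul _ hBT _ hBT) ?_
      rw [Module.End.mul_eq_comp]
      exact LinearMap.range_comp_le_range _ _
    have hBAB : ∀ A ∈ T, B * A * B = 0 := by
      intro A hA
      have h1 : B * A ∈ T := hmul _ hBT _ hA
      refine squeeze (B * A) (hnil _ h1) ?_ ?_
      · rw [mul_assoc]; exact hmul _ hBT _ (hmul _ hA _ hBT)
      · rw [mul_assoc, Module.End.mul_eq_comp]
        exact LinearMap.range_comp_le_range _ _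
    set M' : Submodule ℂ V := LinearMap.ker B ⊓ ⨅ A ∈ T, LinearMap.ker (B * A) with hM'
    have hmem : ∀ x : V, x ∈ M' ↔ B x = 0 ∧ ∀ A ∈ T, B (A x) = 0 := by
      intro x
      simp [hM', Submodule.mem_iInf, Module.End.mul_apply]
    have hrange : LinearMap.range B ≤ M' := by
      rintro _ ⟨u, rfl⟩
      rw [hmem]
      constructor
      · rw [← Module.End.mul_apply, hBB]; rfl
      · intro A hA
        rw [← Module.End.mul_apply, ← Module.End.mul_apply, hBAB A hA]; rfl
    have hM'bot : M' ≠ ⊥ := by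
      intro h
      rw [h, le_bot_iff, LinearMap.range_eq_bot] at hrange
      exact hBne hrange
    have hM'top : M' < ⊤ := by
      rcases lt_or_eq_of_le (le_top : M' ≤ ⊤) with h | h
      · exact h
      · exfalso
        obtain ⟨u, hu⟩ : ∃ u, B u ≠ 0 := by
          by_contra hc; push_neg at hc
          exact hBne (LinearMap.ext fun u => hc u)
        have : u ∈ M' := h ▸ Submodule.mem_top
        exact hu ((hmem u).mp this).1
    have hinv : ∀ f ∈ T, ∀ x ∈ M', f x ∈ M' := by
      intro f hf x hx
      rw [hmem] at hx ⊢
      refine ⟨hx.2 f hf, ?_⟩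
      intro A hA
      have := hx.2 (A * f) (hmul A hA f hf)
      simpa [Module.End.mul_apply] using this
    set T' : Set (Module.End ℂ M') :=
      {g | ∃ f, ∃ _ : f ∈ T, ∀ x : M', (g x : V) = f (x : V)} with hT'
    have hT'mul : ∀ g₁ ∈ T', ∀ g₂ ∈ T', g₁ * g₂ ∈ T' := by
      rintro g₁ ⟨f₁, hf₁, he₁⟩ g₂ ⟨f₂, hf₂, he₂⟩
      exact ⟨f₁ * f₂, hmul _ hf₁ _ hf₂, fun x => by
        rw [Module.End.mul_apply, he₁, he₂, Module.End.mul_apply]⟩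
    have hT'nil : ∀ g ∈ T', IsNilpotent g := by
      rintro g ⟨f, hf, he⟩
      obtain ⟨k, hk⟩ := hnil f hf
      refine ⟨k, ?_⟩
      have key : ∀ j : ℕ, ∀ x : M', ((g ^ j) x : V) = (f ^ j) (x : V) := by
        intro j
        induction j with
        | zero => intro x; simp
        | succ j ih =>
          intro x
          rw [pow_succ', pow_succ', Module.End.mul_apply, Module.End.mul_apply, he, ih]
      ext x
      have := key k x
      rw [hk] at this
      simpa using Subtype.ext this
    have hrankM' : finrank ℂ M' < finrank ℂ V := Submodule.finrank_lt hM'top.ne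
    have hposM' : 0 < finrank ℂ M' := by
      rw [finrank_pos_iff]
      exact Submodule.nontrivial_iff_ne_bot.mpr hM'bot
    obtain ⟨v, hv0, hv⟩ := IH (finrank ℂ M') (lt_of_lt_of_le hrankM' hVN) M' le_rfl
      hposM' T' hT'mul hT'nil
    refine ⟨(v : V), by simpa using hv0, ?_⟩
    intro f hf
    have hgT' : f.restrict (fun x hx => hinv f hf x hx) ∈ T' := ⟨f, hf, fun x => rfl⟩
    have h0 := hv _ hgT'
    have h1 : ((f.restrict (fun x hx => hinv f hf x hx)) v : V) = 0 := by rw [h0]; rfl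
    rwa [show ((f.restrict (fun x hx => hinv f hf x hx)) v : V) = f (v : V) from rfl] at h1

def Lop {n : ℕ} (A : Mat n) : Module.End ℂ (Euc n) := (opOf A : Euc n →ₗ[ℂ] Euc n)

lemma Lop_mul {n : ℕ} (A B : Mat n) : Lop (A * B) = Lop A * Lop B := by
  unfold Lop opOf
  rw [_root_.map_mul]
  rfl

lemma Lop_nilpotent {n : ℕ} (A : Mat n) (h : IsNilpotent A) : IsNilpotent (Lop A) := by
  obtain ⟨k, hk⟩ := h
  refine ⟨k, ?_⟩
  have : ∀ j : ℕ, Lop (A ^ j) = (Lop A) ^ j := by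
    intro j
    induction j with
    | zero => unfold Lop opOf; rw [pow_zero, pow_zero, _root_.map_one]; rfl
    | succ j ih => rw [pow_succ, pow_succ, Lop_mul, ih]
  rw [← this, hk]
  unfold Lop opOf
  rw [_root_.map_zero]
  rfl


lemma quotient_step {n : ℕ} (S : Set (Mat n)) (hS : IsOpAlg S)
    (hnil : ∀ A ∈ S, IsNilpotent A) (U : Submodule ℂ (Euc n))
    (hUinv : ∀ A, A ∈ S → U ≤ U.comap (Lop A)) (hUtop : U ≠ ⊤) :
    ∃ x : Euc n, x ∉ U ∧ ∀ A ∈ S, Lop A x ∈ U := by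
  classical
  have hlt : U < ⊤ := lt_of_le_of_ne le_top hUtop
  have hnontriv : Nontrivial (Euc n ⧸ U) := Submodule.Quotient.nontrivial_iff.mpr hUtop
  set T : Set (Module.End ℂ (Euc n ⧸ U)) :=
    {g | ∃ A, ∃ hA : A ∈ S, g = U.mapQ U (Lop A) (hUinv A hA)} with hT
  have hTmul : ∀ f ∈ T, ∀ g ∈ T, f * g ∈ T := by
    rintro f ⟨A, hA, rfl⟩ g ⟨B, hB, rfl⟩
    refine ⟨A * B, hS.2.2.2 A hA B hB, ?_⟩
    apply LinearMap.ext
    intro y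
    obtain ⟨x, rfl⟩ := Submodule.Quotient.mk_surjective U y
    rw [Module.End.mul_apply, Submodule.mapQ_apply, Submodule.mapQ_apply,
      Submodule.mapQ_apply, Lop_mul, Module.End.mul_apply]
  have hTnil : ∀ f ∈ T, IsNilpotent f := by
    rintro f ⟨A, hA, rfl⟩
    obtain ⟨k, hk⟩ := Lop_nilpotent A (hnil A hA)
    refine ⟨k, ?_⟩
    have key : ∀ j : ℕ, ∀ x : Euc n,
        ((U.mapQ U (Lop A) (hUinv A hA)) ^ j) (Submodule.Quotient.mk x)
          = Submodule.Quotient.mk ((Lop A ^ j) x) := by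
      intro j
      induction j with
      | zero => intro x; simp
      | succ j ih =>
        intro x
        rw [pow_succ', pow_succ', Module.End.mul_apply, Module.End.mul_apply,
          ih, Submodule.mapQ_apply]
    apply LinearMap.ext
    intro y
    obtain ⟨x, rfl⟩ := Submodule.Quotient.mk_surjective U y
    rw [key k x, hk]
    simp
  have hpos : 0 < finrank ℂ (Euc n ⧸ U) := finrank_pos_iff.mpr hnontriv
  obtain ⟨v, hv0, hv⟩ := common_kernel (finrank ℂ (Euc n ⧸ U)) (Euc n ⧸ U) le_rfl hpos T hTmul hTnil
  obtain ⟨x, rfl⟩ := Submodule.Quotient.mk_surjective U v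
  refine ⟨x, ?_, ?_⟩
  · intro hx
    exact hv0 ((Submodule.Quotient.mk_eq_zero U).mpr hx)
  · intro A hA
    have := hv _ ⟨A, hA, rfl⟩
    rw [Submodule.mapQ_apply] at this
    exact (Submodule.Quotient.mk_eq_zero U).mp this

def Vfil {n : ℕ} (S : Set (Mat n)) : ℕ → Submodule ℂ (Euc n)
  | 0 => ⊥
  | (i+1) => ⨅ A ∈ S, Submodule.comap (Lop A) (Vfil S i)

lemma mem_Vfil_succ {n : ℕ} (S : Set (Mat n)) (i : ℕ) (x : Euc n) :
    x ∈ Vfil S (i+1) ↔ ∀ A ∈ S, Lop A x ∈ Vfil S i := by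
  simp [Vfil, Submodule.mem_iInf]

lemma Vfil_mono_succ {n : ℕ} (S : Set (Mat n)) (i : ℕ) : Vfil S i ≤ Vfil S (i+1) := by
  induction i with
  | zero => exact bot_le
  | succ i ih =>
    intro x hx
    rw [mem_Vfil_succ] at hx ⊢
    exact fun A hA => ih (hx A hA)

lemma Vfil_mono {n : ℕ} (S : Set (Mat n)) {i j : ℕ} (h : i ≤ j) : Vfil S i ≤ Vfil S j := by
  induction j with
  | zero => rw [Nat.le_zero.mp h]
  | succ j ih =>
    rcases Nat.lt_or_ge i (j+1) with h' | h'
    · exact le_trans (ih (Nat.lt_succ_iff.mp h')) (Vfil_mono_succ S j)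
    · rw [le_antisymm h h']

lemma Vfil_invariant {n : ℕ} (S : Set (Mat n)) (i : ℕ) :
    ∀ A, A ∈ S → Vfil S i ≤ (Vfil S i).comap (Lop A) := by
  intro A hA x hx
  have : x ∈ Vfil S (i+1) := Vfil_mono_succ S i hx
  rw [mem_Vfil_succ] at this
  exact this A hA

lemma Vfil_strict {n : ℕ} (S : Set (Mat n)) (hS : IsOpAlg S)
    (hnil : ∀ A ∈ S, IsNilpotent A) (i : ℕ) (h : Vfil S i ≠ ⊤) :
    Vfil S i < Vfil S (i+1) := by
  obtain ⟨x, hx1, hx2⟩ := quotient_step S hS hnil (Vfil S i) (Vfil_invariant S i) h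
  refine lt_of_le_of_ne (Vfil_mono_succ S i) ?_
  intro he
  apply hx1
  rw [he, mem_Vfil_succ]
  exact hx2

lemma Vfil_top {n : ℕ} (S : Set (Mat n)) (hS : IsOpAlg S)
    (hnil : ∀ A ∈ S, IsNilpotent A) : Vfil S n = ⊤ := by
  have key : ∀ i : ℕ, Vfil S i = ⊤ ∨ i ≤ finrank ℂ (Vfil S i) := by
    intro i
    induction i with
    | zero => right; exact Nat.zero_le _
    | succ i ih =>
      by_cases h : Vfil S i = ⊤
      · left
        exact le_antisymm le_top (h ▸ Vfil_mono_succ S i)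
      · rcases ih with h' | h'
        · exact absurd h' h
        · by_cases h2 : Vfil S (i+1) = ⊤
          · left; exact h2
          · right
            exact Nat.succ_le_of_lt
              (lt_of_le_of_lt h' (Submodule.finrank_lt_finrank_of_lt (Vfil_strict S hS hnil i h)))
  rcases key n with h | h
  · exact h
  · apply Submodule.eq_top_of_finrank_eq
    refine le_antisymm (Submodule.finrank_le _) ?_
    simpa using h

lemma Lop_apply {n : ℕ} (A : Mat n) (x : Euc n) : Lop A x = opOf A x := rfl

lemma chain_bound {n : ℕ} (S : Set (Mat n)) (k : ℕ) (v : ℕ → Euc n)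
    (h : IsQChain S k v) : ∀ d i, i + d < k → v i ∉ Vfil S d := by
  intro d
  induction d with
  | zero =>
    intro i hi hmem
    exact h.1 i (by omega) (by simpa [Vfil] using hmem)
  | succ d ih =>
    intro i hi hmem
    obtain ⟨A, hA, hv⟩ := h.2 i (by omega)
    apply ih (i+1) (by omega)
    rw [hv, ← Lop_apply]
    exact (mem_Vfil_succ S d (v i)).mp hmem A hA

lemma chain_exists {n : ℕ} (S : Set (Mat n)) :
    ∀ d (x : Euc n), x ∉ Vfil S d → ∃ v : ℕ → Euc n, IsQChain S (d+1) v ∧ v 0 = x := by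
  intro d
  induction d with
  | zero =>
    intro x hx
    refine ⟨fun _ => x, ⟨?_, ?_⟩, rfl⟩
    · intro i _
      simpa [Vfil] using hx
    · intro i hi; omega
  | succ d ih =>
    intro x hx
    have : ¬ ∀ A ∈ S, Lop A x ∈ Vfil S d := fun hc => hx ((mem_Vfil_succ S d x).mpr hc)
    push_neg at this
    obtain ⟨A, hA, hAx⟩ := this
    obtain ⟨w, hw, hw0⟩ := ih (Lop A x) hAx
    refine ⟨fun i => match i with | 0 => x | (j+1) => w j, ⟨?_, ?_⟩, rfl⟩
    · intro i hi
      match i with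
      | 0 =>
        intro h0
        have h0' : x = 0 := h0
        exact hx (h0' ▸ (Vfil S (d+1)).zero_mem)
      | (j+1) => exact hw.1 j (by omega)
    · intro i hi
      match i with
      | 0 =>
        refine ⟨A, hA, ?_⟩
        show w 0 = opOf A x
        rw [hw0]; rfl
      | (j+1) =>
        obtain ⟨B, hB, hBw⟩ := hw.2 j (by omega)
        exact ⟨B, hB, hBw⟩

-- helpers about oproj
lemma oproj_apply {n : ℕ} (E : Submodule ℂ (Euc n)) (y : Euc n) :
    oproj E y = ↑(E.orthogonalProjection y) := rfl

lemma oproj_mem {n : ℕ} (E : Submodule ℂ (Euc n)) (y : Euc n) : oproj E y ∈ E :=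
  (E.orthogonalProjection y).2

lemma oproj_of_mem {n : ℕ} (E : Submodule ℂ (Euc n)) (x : Euc n) (h : x ∈ E) :
    oproj E x = x := by
  rw [oproj_apply]; exact Submodule.starProjection_eq_self_iff.mpr h

lemma oproj_of_orth {n : ℕ} (E : Submodule ℂ (Euc n)) (x : Euc n) (h : x ∈ Eᗮ) :
    oproj E x = 0 := by
  rw [oproj_apply, Submodule.orthogonalProjectionOnto_eq_zero_iff.mpr h]
  rfl

lemma sup_inf_orth {n : ℕ} (D B : Submodule ℂ (Euc n)) (h : D ≤ Bᗮ) :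
    (D ⊔ B) ⊓ Bᗮ ≤ D := by
  intro y hy
  obtain ⟨hy1, hy2⟩ := Submodule.mem_inf.mp hy
  obtain ⟨a, ha, b, hb, rfl⟩ := Submodule.mem_sup.mp hy1
  have hba : (inner ℂ b a : ℂ) = 0 := (Submodule.mem_orthogonal _ _).mp (h ha) b hb
  have hby : (inner ℂ b (a + b) : ℂ) = 0 := (Submodule.mem_orthogonal _ _).mp hy2 b hb
  rw [inner_add_right, hba, zero_add, inner_self_eq_zero] at hby
  rw [hby, add_zero]
  exact ha

lemma Vfil_invariantSub {n : ℕ} (S : Set (Mat n)) (i : ℕ) : InvariantSub S (Vfil S i) :=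
  fun A hA x hx => Vfil_invariant S i A hA hx

lemma antichain_piece {n : ℕ} (S : Set (Mat n)) (hS : IsOpAlg S)
    (hnil : ∀ A ∈ S, IsNilpotent A) (m : ℕ) (hm : Vfil S m ≠ ⊤) :
    QAntichain S (Vfil S (m+1) ⊓ (Vfil S m)ᗮ) := by
  set E := Vfil S (m+1) ⊓ (Vfil S m)ᗮ with hE
  have hstrict := Vfil_strict S hS hnil m hm
  refine ⟨?_, ⟨Vfil S (m+1), Vfil S m, Vfil_invariantSub S (m+1), Vfil_invariantSub S m,
    Vfil_mono_succ S m, rfl⟩, ?_⟩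
  · intro hbot
    have hsup := Submodule.sup_orthogonal_inf_of_hasOrthogonalProjection (Vfil_mono_succ S m)
    rw [inf_comm] at hsup
    rw [← hE, hbot, sup_bot_eq] at hsup
    exact absurd hsup (ne_of_lt hstrict)
  · intro A hA
    apply ContinuousLinearMap.ext
    intro y
    show oproj E (opOf A (oproj E y)) = 0
    have h1 : oproj E y ∈ Vfil S (m+1) := (inf_le_left : E ≤ _) (oproj_mem E y)
    have h2 : opOf A (oproj E y) ∈ Vfil S m :=
      (mem_Vfil_succ S m _).mp h1 A hA
    have h3 : Vfil S m ≤ Eᗮ :=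
      le_trans (Vfil S m).le_orthogonal_orthogonal
        (Submodule.orthogonal_le (inf_le_right : E ≤ (Vfil S m)ᗮ))
    exact oproj_of_orth E _ (h3 h2)

lemma Fin_Iic_zero {k : ℕ} (h : 0 < k) :
    Set.Iic (⟨0, h⟩ : Fin k) = {(⟨0, h⟩ : Fin k)} := by
  ext j
  simp only [Set.mem_Iic, Set.mem_singleton_iff, Fin.le_def, Fin.ext_iff]
  omega

lemma Fin_Iic_succ {k : ℕ} (m : ℕ) (h : m + 1 < k) :
    Set.Iic (⟨m+1, h⟩ : Fin k)
      = insert (⟨m+1, h⟩ : Fin k) (Set.Iic (⟨m, by omega⟩ : Fin k)) := by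
  ext j
  simp only [Set.mem_Iic, Set.mem_insert_iff, Fin.le_def, Fin.ext_iff]
  omega

lemma partial_sup_eq {n : ℕ} (S : Set (Mat n)) (hS : IsOpAlg S)
    (hnil : ∀ A ∈ S, IsNilpotent A) (r : ℕ)
    (hr1 : Vfil S r = ⊤) (hr2 : ∀ m, m < r → Vfil S m ≠ ⊤) :
    ∀ m (hm : m < r),
      (⨆ j ∈ Set.Iic (⟨m, hm⟩ : Fin r), (Vfil S (j.1+1) ⊓ (Vfil S j.1)ᗮ)) = Vfil S (m+1) := by
  intro m
  induction m with
  | zero =>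
    intro hm
    rw [Fin_Iic_zero hm]
    rw [iSup_singleton]
    show Vfil S 1 ⊓ (Vfil S 0)ᗮ = Vfil S 1
    rw [show Vfil S 0 = ⊥ from rfl, Submodule.bot_orthogonal_eq_top, inf_top_eq]
  | succ m ih =>
    intro hm
    rw [Fin_Iic_succ m hm, iSup_insert, ih (by omega)]
    show (Vfil S (m+2) ⊓ (Vfil S (m+1))ᗮ) ⊔ Vfil S (m+1) = Vfil S (m+2)
    rw [inf_comm, sup_comm]
    exact Submodule.sup_orthogonal_inf_of_hasOrthogonalProjection (Vfil_mono_succ S (m+1))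

lemma partition_exists {n : ℕ} (S : Set (Mat n)) (hS : IsOpAlg S)
    (hnil : ∀ A ∈ S, IsNilpotent A) (r : ℕ) (hrpos : 1 ≤ r)
    (hr1 : Vfil S r = ⊤) (hr2 : ∀ m, m < r → Vfil S m ≠ ⊤) :
    ∃ E : Fin r → Submodule ℂ (Euc n), OrderedQAPartition S r E := by
  refine ⟨fun i => Vfil S (i.1+1) ⊓ (Vfil S i.1)ᗮ, ?_, ?_, ?_, ?_⟩
  · intro i
    exact antichain_piece S hS hnil i.1 (hr2 i.1 i.2)
  · -- pairwise orthogonality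
    have key : ∀ i j : Fin r, i < j →
        ∀ x ∈ Vfil S (i.1+1) ⊓ (Vfil S i.1)ᗮ, ∀ y ∈ Vfil S (j.1+1) ⊓ (Vfil S j.1)ᗮ,
        (inner ℂ x y : ℂ) = 0 := by
      intro i j hij x hx y hy
      have hxm : x ∈ Vfil S j.1 := Vfil_mono S (by omega : i.1 + 1 ≤ j.1) (Submodule.mem_inf.mp hx).1
      exact (Submodule.mem_orthogonal _ _).mp (Submodule.mem_inf.mp hy).2 x hxm
    intro i j hij x hx y hy
    rcases lt_or_gt_of_ne hij with h | h
    · exact key i j h x hx y hy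
    · have := key j i h y hy x hx
      rw [← inner_conj_symm, this, map_zero]
  · -- total sup
    apply le_antisymm le_top
    have := partial_sup_eq S hS hnil r hr1 hr2 (r-1) (by omega)
    calc (⊤ : Submodule ℂ (Euc n)) = Vfil S ((r-1)+1) := by
            rw [show r - 1 + 1 = r by omega, hr1]
      _ = ⨆ j ∈ Set.Iic (⟨r-1, by omega⟩ : Fin r), (Vfil S (j.1+1) ⊓ (Vfil S j.1)ᗮ) := this.symm
      _ ≤ ⨆ j : Fin r, (Vfil S (j.1+1) ⊓ (Vfil S j.1)ᗮ) := by
          apply iSup₂_le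
          intro j _
          exact le_iSup (fun j : Fin r => Vfil S (j.1+1) ⊓ (Vfil S j.1)ᗮ) j
  · intro i
    have := partial_sup_eq S hS hnil r hr1 hr2 i.1 i.2
    rw [show (⟨i.1, i.2⟩ : Fin r) = i from rfl] at this
    rw [this]
    exact Vfil_invariantSub S (i.1+1)

lemma step_bound {n : ℕ} (S : Set (Mat n)) (m : ℕ) (B D : Submodule ℂ (Euc n))
    (hDorth : D ≤ Bᗮ) (hDinv : InvariantSub S D) (hDle : D ≤ Vfil S m)
    (hFinv : InvariantSub S (D ⊔ B)) (hcompr : ∀ A ∈ S, compr B A = 0) :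
    D ⊔ B ≤ Vfil S (m+1) := by
  intro x hx
  rw [mem_Vfil_succ]
  intro A hA
  obtain ⟨a, ha, b, hb, rfl⟩ := Submodule.mem_sup.mp hx
  have hAa : Lop A a ∈ D := hDinv A hA a ha
  have hAbF : Lop A b ∈ D ⊔ B := hFinv A hA b (Submodule.mem_sup_right hb)
  have h0 : oproj B (Lop A b) = 0 := by
    have := DFunLike.congr_fun (hcompr A hA) b
    rw [show compr B A b = oproj B (opOf A (oproj B b)) from rfl, oproj_of_mem B b hb] at this
    exact this
  have horthb : Lop A b ∈ Bᗮ := by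
    rw [oproj_apply] at h0
    exact Submodule.orthogonalProjectionOnto_eq_zero_iff.mp (ZeroMemClass.coe_eq_zero.mp h0)
  have hAbD : Lop A b ∈ D := sup_inf_orth D B hDorth (Submodule.mem_inf.mpr ⟨hAbF, horthb⟩)
  show Lop A (a + b) ∈ Vfil S m
  rw [map_add]
  exact Submodule.add_mem _ (hDle hAa) (hDle hAbD)

lemma partition_bound {n : ℕ} (hn : 1 ≤ n) (S : Set (Mat n)) (k : ℕ)
    (E : Fin k → Submodule ℂ (Euc n)) (hE : OrderedQAPartition S k E) :
    Vfil S k = ⊤ := by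
  obtain ⟨hanti, horth, hsup, hinv⟩ := hE
  have hnt : Nontrivial (Euc n) := by
    have : 0 < Module.finrank ℂ (Euc n) := by
      simp; omega
    exact Module.nontrivial_of_finrank_pos this
  rcases Nat.eq_zero_or_pos k with rfl | hk
  · exfalso
    rw [iSup_of_empty] at hsup
    exact absurd hsup bot_ne_top
  have key : ∀ m (hm : m < k), (⨆ j ∈ Set.Iic (⟨m, hm⟩ : Fin k), E j) ≤ Vfil S (m+1) := by
    intro m
    induction m with
    | zero =>
      intro hm
      rw [Fin_Iic_zero hm]
      rw [iSup_singleton]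
      have := step_bound S 0 (E ⟨0, hm⟩) ⊥ bot_le
        (fun A hA x hx => by
          rw [Submodule.mem_bot] at hx ⊢
          rw [hx, map_zero])
        bot_le
        (by
          rw [bot_sup_eq]
          have h := hinv ⟨0, hm⟩
          rwa [Fin_Iic_zero hm, iSup_singleton] at h)
        ((hanti ⟨0, hm⟩).2.2)
      rwa [bot_sup_eq] at this
    | succ m ih =>
      intro hm
      have hm' : m < k := by omega
      have hsplit : (⨆ j ∈ Set.Iic (⟨m+1, hm⟩ : Fin k), E j)
          = (⨆ j ∈ Set.Iic (⟨m, hm'⟩ : Fin k), E j) ⊔ E ⟨m+1, hm⟩ := by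
        rw [Fin_Iic_succ m hm, iSup_insert, sup_comm]
      have hDorth : (⨆ j ∈ Set.Iic (⟨m, hm'⟩ : Fin k), E j) ≤ (E ⟨m+1, hm⟩)ᗮ := by
        apply iSup₂_le
        intro j hj
        intro z hz
        rw [Submodule.mem_orthogonal]
        intro u hu
        refine horth ⟨m+1, hm⟩ j ?_ u hu z hz
        intro hne
        have h1 : j.1 ≤ m := (Fin.le_def).mp hj
        have h2 : j.1 = m + 1 := by rw [← hne]
        omega
      have := step_bound S (m+1) (E ⟨m+1, hm⟩) (⨆ j ∈ Set.Iic (⟨m, hm'⟩ : Fin k), E j)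
        hDorth (hinv ⟨m, hm'⟩) (ih hm') (hsplit ▸ hinv ⟨m+1, hm⟩) ((hanti ⟨m+1, hm⟩).2.2)
      rwa [← hsplit] at this
  have hfin := key (k-1) (by omega)
  have htop : (⊤ : Submodule ℂ (Euc n)) ≤ Vfil S k := by
    rw [← hsup]
    have h1 : (⨆ i, E i) ≤ ⨆ j ∈ Set.Iic (⟨k-1, by omega⟩ : Fin k), E j := by
      apply iSup_le
      intro i
      apply le_iSup₂ (f := fun j _ => E j) i
      simp only [Set.mem_Iic, Fin.le_def]
      show i.1 ≤ k - 1
      omega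
    calc (⨆ i, E i) ≤ _ := h1
      _ ≤ Vfil S ((k-1)+1) := hfin
      _ = Vfil S k := by rw [show k - 1 + 1 = k by omega]
  exact le_antisymm le_top htop


/-- Quantum Mirsky theorem: for a nilpotent operator algebra in `Mₙ(ℂ)` (`n ≥ 1`), the maximal
length of a quantum chain equals the minimal size of an ordered partition of `ℂⁿ` into quantum
antichains. -/
theorem quantum_mirsky (n : ℕ) (hn : 1 ≤ n) (S : Set (Mat n)) (hS : IsOpAlg S)
    (hnil : ∀ A ∈ S, IsNilpotent A) :
    ∃ r : ℕ,
      (∃ v : ℕ → Euc n, IsQChain S r v) ∧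
      (∀ (k : ℕ) (v : ℕ → Euc n), IsQChain S k v → k ≤ r) ∧
      (∃ E : Fin r → Submodule ℂ (Euc n), OrderedQAPartition S r E) ∧
      (∀ (k : ℕ) (E : Fin k → Submodule ℂ (Euc n)), OrderedQAPartition S k E → r ≤ k) := by
  classical
  have hnt : Nontrivial (Euc n) := by
    have : 0 < Module.finrank ℂ (Euc n) := by simp; omega
    exact Module.nontrivial_of_finrank_pos this
  have hex : ∃ m, Vfil S m = ⊤ := ⟨n, Vfil_top S hS hnil⟩
  set r := Nat.find hex with hrdef
  have hr1 : Vfil S r = ⊤ := Nat.find_spec hex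
  have hr2 : ∀ m, m < r → Vfil S m ≠ ⊤ := fun m hm => Nat.find_min hex hm
  have hrpos : 1 ≤ r := by
    by_contra h
    have h0 : r = 0 := by omega
    have := hr1
    rw [h0] at this
    exact absurd (this : (⊥ : Submodule ℂ (Euc n)) = ⊤) bot_ne_top
  refine ⟨r, ?_, ?_, partition_exists S hS hnil r hrpos hr1 hr2, ?_⟩
  · -- a chain of length r exists
    have hne : Vfil S (r-1) ≠ ⊤ := hr2 (r-1) (by omega)
    obtain ⟨x, hx⟩ : ∃ x, x ∉ Vfil S (r-1) := by
      by_contra hc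
      push_neg at hc
      exact hne (Submodule.eq_top_iff'.mpr hc)
    obtain ⟨v, hv, _⟩ := chain_exists S (r-1) x hx
    rw [show r - 1 + 1 = r by omega] at hv
    exact ⟨v, hv⟩
  · -- every chain has length ≤ r
    intro k v hv
    rcases Nat.eq_zero_or_pos k with rfl | hk
    · omega
    have hb := chain_bound S k v hv (k-1) 0 (by omega)
    by_contra hlt
    have hge : r ≤ k - 1 := by omega
    have : Vfil S (k-1) = ⊤ := le_antisymm le_top (hr1 ▸ Vfil_mono S hge)
    rw [this] at hb
    exact hb Submodule.mem_top
  · intro k E hE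
    exact Nat.find_le (partition_bound hn S k E hE)
end
end
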